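/- Let F : ℝ^N → ℝ be convex and differentiable with L-Lipschitz gradient, let G : ℝ^N → ℝ be convex, set H = F + G, and let x* be a minimizer of H. Then for every x ∈ ℝ^N: ‖∇F(x)‖² ≤ 2·‖∇F(x*)‖² + 4L·(H(x) − H(x*)). -/

import Mathlib

open scoped RealInnerProductSpace

section Aux

variable {E : Type*} [NormedAddCommGroup E] [InnerProductSpace ℝ E] [CompleteSpace E]
variable {F : E → ℝ} {gradF : E → E}

lemma aux_line_deriv (hdiff : ∀ z, HasGradientAt F (gradF z) z) (p d : E) (t : ℝ) :
    HasDerivAt (fun s : ℝ => F (p + s • d)) ⟪gradF (p + t • d), d⟫ t := by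
  have h1 : HasDerivAt (fun s : ℝ => p + s • d) d t := by
    simpa using ((hasDerivAt_id t).smul_const d).const_add p
  have h2 := (hdiff (p + t • d)).hasFDerivAt.comp_hasDerivAt t h1
  simpa [InnerProductSpace.toDual_apply_apply, Function.comp_def] using h2

lemma aux_descent {L : ℝ} (hL : 0 ≤ L)
    (hdiff : ∀ z, HasGradientAt F (gradF z) z)
    (hlip : ∀ x y, ‖gradF x - gradF y‖ ≤ L * ‖x - y‖) (p d : E) :
    F (p + d) ≤ F p + ⟪gradF p, d⟫ + L / 2 * ‖d‖ ^ 2 := by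
  have hgradcont : Continuous gradF := by
    refine (LipschitzWith.of_dist_le_mul (K := L.toNNReal) fun a b => ?_).continuous
    rw [dist_eq_norm, dist_eq_norm, Real.coe_toNNReal L hL]
    exact hlip a b
  have hg : ∀ t : ℝ, HasDerivAt (fun s : ℝ => F (p + s • d))
      ⟪gradF (p + t • d), d⟫ t := aux_line_deriv hdiff p d
  have hcont : Continuous fun t : ℝ => (⟪gradF (p + t • d), d⟫ : ℝ) := by
    exact (hgradcont.comp (by continuity)).inner continuous_const
  have key : F (p + (1:ℝ) • d) - F (p + (0:ℝ) • d)
      = ∫ t in (0:ℝ)..1, ⟪gradF (p + t • d), d⟫ :=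
    (intervalIntegral.integral_eq_sub_of_hasDerivAt (fun t _ => hg t)
      (hcont.intervalIntegrable 0 1)).symm
  have hbound : ∀ t ∈ Set.Icc (0:ℝ) 1,
      (⟪gradF (p + t • d), d⟫ : ℝ) ≤ ⟪gradF p, d⟫ + (L * ‖d‖ ^ 2) * t := by
    intro t ht
    have h1 : (⟪gradF (p + t • d) - gradF p, d⟫ : ℝ) ≤ ‖gradF (p + t • d) - gradF p‖ * ‖d‖ :=
      real_inner_le_norm _ _
    have h2 : ‖gradF (p + t • d) - gradF p‖ ≤ L * (t * ‖d‖) := by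
      have := hlip (p + t • d) p
      simpa [norm_smul, abs_of_nonneg ht.1] using this
    have h3 : ‖gradF (p + t • d) - gradF p‖ * ‖d‖ ≤ L * (t * ‖d‖) * ‖d‖ :=
      mul_le_mul_of_nonneg_right h2 (norm_nonneg d)
    have h4 : (⟪gradF (p + t • d), d⟫ : ℝ) = ⟪gradF p, d⟫ + ⟪gradF (p + t • d) - gradF p, d⟫ := by
      rw [inner_sub_left]; ring
    rw [h4]; nlinarith [norm_nonneg d]
  have hint : ∫ t in (0:ℝ)..1, ⟪gradF (p + t • d), d⟫
      ≤ ∫ t in (0:ℝ)..1, (⟪gradF p, d⟫ + (L * ‖d‖ ^ 2) * t) := by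
    apply intervalIntegral.integral_mono_on (by norm_num)
      (hcont.intervalIntegrable 0 1)
      (((continuous_const.add (continuous_const.mul continuous_id)).intervalIntegrable 0 1))
      hbound
  have hval : ∫ t in (0:ℝ)..1, (⟪gradF p, d⟫ + (L * ‖d‖ ^ 2) * t)
      = ⟪gradF p, d⟫ + L / 2 * ‖d‖ ^ 2 := by
    have : (fun t : ℝ => ⟪gradF p, d⟫ + L * ‖d‖ ^ 2 * t)
        = fun t : ℝ => ⟪gradF p, d⟫ + (L * ‖d‖ ^ 2) * id t := rfl
    rw [this, intervalIntegral.integral_add (g := fun t : ℝ => L * ‖d‖ ^ 2 * id t) (intervalIntegrable_const)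
      ((continuous_const.mul continuous_id).intervalIntegrable 0 1),
      intervalIntegral.integral_const_mul]
    simp [integral_id]
    ring
  have : F (p + (1:ℝ) • d) - F (p + (0:ℝ) • d) ≤ ⟪gradF p, d⟫ + L / 2 * ‖d‖ ^ 2 := by
    rw [key]; exact hint.trans_eq hval
  simp at this
  linarith

lemma aux_first_order (hconv : ConvexOn ℝ Set.univ F)
    (hdiff : ∀ z, HasGradientAt F (gradF z) z) (p q : E) :
    F p + ⟪gradF p, q - p⟫ ≤ F q := by
  set g : ℝ → ℝ := fun t => F (p + t • (q - p)) with hgdef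
  have hgconv : ConvexOn ℝ Set.univ g := by
    have := hconv.comp_affineMap (AffineMap.lineMap p q : ℝ →ᵃ[ℝ] E)
    simpa [hgdef, Function.comp_def, AffineMap.lineMap_apply, add_comm] using this
  have hg0 : HasDerivAt g ⟪gradF (p + (0:ℝ) • (q - p)), q - p⟫ 0 :=
    aux_line_deriv hdiff p (q - p) 0
  have := hgconv.le_slope_of_hasDerivAt (Set.mem_univ (0:ℝ)) (Set.mem_univ (1:ℝ))
    one_pos (by simpa using hg0)
  have hslope : slope g 0 1 = g 1 - g 0 := by simp [slope_def_field]
  rw [hslope] at this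
  have h1 : g 1 = F q := by simp [hgdef]
  have h0 : g 0 = F p := by simp [hgdef]
  rw [h1, h0] at this
  linarith

end Aux

set_option maxHeartbeats 1000000 in
/-- **Gradient bound via smoothness.**
If `F` is convex and differentiable with `L`-Lipschitz gradient, `G` is convex,
`H = F + G`, and `x*` minimizes `H`, then for every `x`,
`‖∇F(x)‖² ≤ 2‖∇F(x*)‖² + 4L(H x − H x*)`. -/
theorem gradient_bound_via_smoothness
    (N : ℕ) (L : ℝ) (hL : 0 ≤ L)
    (F : EuclideanSpace ℝ (Fin N) → ℝ)
    (gradF : EuclideanSpace ℝ (Fin N) → EuclideanSpace ℝ (Fin N))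
    (hFconv : ConvexOn ℝ Set.univ F)
    (hdiff : ∀ x, HasGradientAt F (gradF x) x)
    (hlip : ∀ x y, ‖gradF x - gradF y‖ ≤ L * ‖x - y‖)
    (G : EuclideanSpace ℝ (Fin N) → ℝ)
    (hGconv : ConvexOn ℝ Set.univ G)
    (xstar : EuclideanSpace ℝ (Fin N))
    (hxstar : ∀ y, F xstar + G xstar ≤ F y + G y)
    (x : EuclideanSpace ℝ (Fin N)) :
    ‖gradF x‖ ^ 2
      ≤ 2 * ‖gradF xstar‖ ^ 2 + 4 * L * ((F x + G x) - (F xstar + G xstar)) := by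
  obtain ⟨c, hc⟩ : ∃ c : EuclideanSpace ℝ (Fin N), c = gradF xstar := ⟨_, rfl⟩
  obtain ⟨d, hd⟩ : ∃ d : EuclideanSpace ℝ (Fin N), d = x - xstar := ⟨_, rfl⟩
  rw [← hc]
  -- subgradient inequality at the minimizer
  have hsub : -⟪c, d⟫ ≤ G x - G xstar := by
    have key : ∀ t : ℝ, 0 < t → t ≤ 1 →
        -⟪c, d⟫ - (G x - G xstar) ≤ (L * ‖d‖ ^ 2 / 2) * t := by
      intro t ht0 ht1
      have hdes := aux_descent hL hdiff hlip xstar (t • d)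
      have hG : G (xstar + t • d) ≤ (1 - t) * G xstar + t * G x := by
        have h1 := hGconv.2 (Set.mem_univ xstar) (Set.mem_univ x)
          (by linarith : (0:ℝ) ≤ 1 - t) (le_of_lt ht0) (by ring)
        have heq : (1 - t) • xstar + t • x = xstar + t • d := by
          rw [hd]
          simp only [sub_smul, smul_sub, one_smul]
          abel
        rw [heq] at h1
        simpa using h1
      have hmin := hxstar (xstar + t • d)
      have hin : (⟪c, t • d⟫ : ℝ) = t * ⟪c, d⟫ := real_inner_smul_right _ _ _
      have hns : ‖t • d‖ ^ 2 = t ^ 2 * ‖d‖ ^ 2 := by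
        rw [norm_smul]; rw [Real.norm_eq_abs, abs_of_pos ht0]; ring
      rw [← hc, hin, hns] at hdes
      have h2 : 0 ≤ t * ⟪c, d⟫ + L / 2 * (t ^ 2 * ‖d‖ ^ 2) + t * (G x - G xstar) := by
        nlinarith [hmin.trans (add_le_add hdes hG)]
      nlinarith
    by_contra hcon
    push_neg at hcon
    obtain ⟨A, hA⟩ : ∃ A : ℝ, A = -⟪c, d⟫ - (G x - G xstar) := ⟨_, rfl⟩
    have hA0 : 0 < A := by rw [hA]; linarith
    obtain ⟨K, hK⟩ : ∃ K : ℝ, K = L * ‖d‖ ^ 2 / 2 := ⟨_, rfl⟩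
    rw [← hA, ← hK] at key
    have hK0 : 0 ≤ K := by rw [hK]; positivity
    have htpos : 0 < min 1 (A / (2 * (K + 1))) := lt_min one_pos (div_pos hA0 (by linarith))
    have ht := key _ htpos (min_le_left _ _)
    have hle : min 1 (A / (2 * (K + 1))) ≤ A / (2 * (K + 1)) := min_le_right _ _
    have hKA : K * min 1 (A / (2 * (K + 1))) ≤ (K + 1) * (A / (2 * (K + 1))) := by
      have := mul_le_mul_of_nonneg_left hle (by linarith : (0:ℝ) ≤ K + 1)
      nlinarith [htpos.le]
    have hhalf : (K + 1) * (A / (2 * (K + 1))) = A / 2 := by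
      field_simp
    nlinarith
  -- the shifted function φ and its gradient
  obtain ⟨φ, hφdef⟩ : ∃ φ : EuclideanSpace ℝ (Fin N) → ℝ,
      φ = fun z => F z - ⟪c, z⟫ := ⟨_, rfl⟩
  obtain ⟨gφ, hgφdef⟩ : ∃ gφ : EuclideanSpace ℝ (Fin N) → EuclideanSpace ℝ (Fin N),
      gφ = fun z => gradF z - c := ⟨_, rfl⟩
  have hφdiff : ∀ z, HasGradientAt φ (gφ z) z := by
    intro z
    have hlin : HasFDerivAt (fun w : EuclideanSpace ℝ (Fin N) => (⟪c, w⟫ : ℝ))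
        (InnerProductSpace.toDual ℝ (EuclideanSpace ℝ (Fin N)) c :
          EuclideanSpace ℝ (Fin N) →L[ℝ] ℝ) z :=
      (InnerProductSpace.toDual ℝ (EuclideanSpace ℝ (Fin N)) c).hasFDerivAt
    have h1 := (hdiff z).hasFDerivAt.sub hlin
    rw [← map_sub] at h1
    have h2 := h1.hasGradientAt
    rw [hφdef, hgφdef]
    simp only [LinearIsometryEquiv.symm_apply_apply] at h2
    exact h2
  have hφlip : ∀ a b : EuclideanSpace ℝ (Fin N), ‖gφ a - gφ b‖ ≤ L * ‖a - b‖ := by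
    intro a b
    rw [hgφdef]
    simpa [sub_sub_sub_cancel_right] using hlip a b
  have hφconv : ConvexOn ℝ Set.univ φ := by
    rw [hφdef]
    have hlin : ConcaveOn ℝ Set.univ fun z : EuclideanSpace ℝ (Fin N) => (⟪c, z⟫ : ℝ) := by
      refine ⟨convex_univ, ?_⟩
      intro u _ v _ a b _ _ _
      show a • (⟪c, u⟫ : ℝ) + b • (⟪c, v⟫ : ℝ) ≤ ⟪c, a • u + b • v⟫
      rw [inner_add_right, real_inner_smul_right, real_inner_smul_right]
      simp [smul_eq_mul]
    exact hFconv.sub hlin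
  have hφmin : ∀ z, φ xstar ≤ φ z := by
    intro z
    have h1 := aux_first_order hφconv hφdiff xstar z
    have h2 : gφ xstar = 0 := by rw [hgφdef]; simp [← hc]
    rw [h2] at h1
    simpa using h1
  rcases eq_or_lt_of_le hL with hL0 | hLpos
  · subst hL0
    have h := hlip x xstar
    rw [zero_mul] at h
    have he : gradF x = gradF xstar := by rwa [norm_le_zero_iff, sub_eq_zero] at h
    have hnorm : ‖gradF x‖ = ‖c‖ := by rw [he, hc]
    rw [hnorm]
    nlinarith [sq_nonneg ‖c‖]
  · -- cocoercivity-type bound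
    have hcoco : ‖gφ x‖ ^ 2 ≤ 2 * L * (φ x - φ xstar) := by
      have hdes := aux_descent hL hφdiff hφlip x (-(L⁻¹ • gφ x))
      have hmin := hφmin (x + -(L⁻¹ • gφ x))
      have hin : (⟪gφ x, -(L⁻¹ • gφ x)⟫ : ℝ) = -(L⁻¹ * ‖gφ x‖ ^ 2) := by
        rw [inner_neg_right, real_inner_smul_right, real_inner_self_eq_norm_sq]
      have hns : ‖-(L⁻¹ • gφ x)‖ ^ 2 = L⁻¹ ^ 2 * ‖gφ x‖ ^ 2 := by
        rw [norm_neg, norm_smul, Real.norm_eq_abs, abs_of_pos (inv_pos.mpr hLpos)]; ring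
      rw [hin, hns] at hdes
      have heq2 : φ x + -(L⁻¹ * ‖gφ x‖ ^ 2) + L / 2 * (L⁻¹ ^ 2 * ‖gφ x‖ ^ 2)
          = φ x - ‖gφ x‖ ^ 2 / (2 * L) := by
        field_simp
        ring
      rw [heq2] at hdes
      have h3 : ‖gφ x‖ ^ 2 / (2 * L) ≤ φ x - φ xstar := by linarith [hmin.trans hdes]
      rw [div_le_iff₀ (by positivity : (0:ℝ) < 2 * L)] at h3
      linarith
    have htri : ‖gradF x‖ ≤ ‖c‖ + ‖gφ x‖ := by
      have h := norm_add_le c (gradF x - c)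
      rw [add_sub_cancel] at h
      rw [hgφdef]
      simpa using h
    have hφx : φ x - φ xstar = F x - F xstar - ⟪c, d⟫ := by
      rw [hφdef, hd]
      simp only [inner_sub_right]
      ring
    have hsq : ‖gradF x‖ * ‖gradF x‖ ≤ (‖c‖ + ‖gφ x‖) * (‖c‖ + ‖gφ x‖) :=
      mul_le_mul htri htri (norm_nonneg _) (by positivity)
    have hmul := mul_le_mul_of_nonneg_left hsub (by positivity : (0:ℝ) ≤ 4 * L)
    nlinarith [hcoco, sq_nonneg (‖c‖ - ‖gφ x‖), hφx]
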